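/- If B is a Riemann matrix (symmetric with positive definite imaginary part) and [[A,B'],[C,D]] is a real symplectic matrix, then CB + D is invertible. -/

import Mathlib

open Matrix Complex

/-- If `B` is a Riemann matrix (symmetric with positive definite imaginary
part) and `[[A,B'],[C,D]]` is a real symplectic matrix, then `CB + D` is
invertible. -/
theorem symplectic_CB_plus_D_invertible (g : ℕ)
    (B : Matrix (Fin g) (Fin g) ℂ) (hBsymm : B.IsSymm)
    (hY : (Matrix.of fun i j => (B i j).im).PosDef)
    (A B' C D : Matrix (Fin g) (Fin g) ℝ)
    (hM : (Matrix.fromBlocks A B' C D)ᵀ *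
          Matrix.fromBlocks (0 : Matrix (Fin g) (Fin g) ℝ) (1 : Matrix (Fin g) (Fin g) ℝ)
            (-1 : Matrix (Fin g) (Fin g) ℝ) (0 : Matrix (Fin g) (Fin g) ℝ) *
          Matrix.fromBlocks A B' C D
        = Matrix.fromBlocks (0 : Matrix (Fin g) (Fin g) ℝ) (1 : Matrix (Fin g) (Fin g) ℝ)
            (-1 : Matrix (Fin g) (Fin g) ℝ) (0 : Matrix (Fin g) (Fin g) ℝ)) :
    IsUnit (C.map (Complex.ofReal) * B + D.map (Complex.ofReal)).det := by
  classical
  -- extract block identities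
  rw [Matrix.fromBlocks_transpose, Matrix.fromBlocks_multiply, Matrix.fromBlocks_multiply,
    Matrix.fromBlocks_inj] at hM
  simp only [Matrix.mul_zero, Matrix.mul_one, Matrix.mul_neg, zero_add, add_zero,
    Matrix.zero_mul, Matrix.one_mul, Matrix.neg_mul] at hM
  obtain ⟨h11, h12, h21, h22⟩ := hM
  -- complex versions of the real matrices
  set a := A.map (Complex.ofReal) with ha
  set b := B'.map (Complex.ofReal) with hb
  set c := C.map (Complex.ofReal) with hc
  set d := D.map (Complex.ofReal) with hd
  have mapT : ∀ X : Matrix (Fin g) (Fin g) ℝ,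
      (Xᵀ).map (Complex.ofReal) = (X.map Complex.ofReal)ᵀ := fun X => Matrix.transpose_map
  have mapM : ∀ X Y : Matrix (Fin g) (Fin g) ℝ,
      (X * Y).map (Complex.ofReal) = X.map Complex.ofReal * Y.map Complex.ofReal := by
    intro X Y
    exact Matrix.map_mul (f := Complex.ofRealHom)
  have mapS : ∀ X Y : Matrix (Fin g) (Fin g) ℝ,
      (X - Y).map (Complex.ofReal) = X.map Complex.ofReal - Y.map Complex.ofReal := by
    intro X Y; ext i j; simp
  have map1 : (1 : Matrix (Fin g) (Fin g) ℝ).map (Complex.ofReal) = 1 :=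
    Matrix.map_one _ Complex.ofReal_zero Complex.ofReal_one
  have hacR : Aᵀ * C - Cᵀ * A = 0 := by rw [sub_eq_zero]; exact (neg_add_eq_zero.mp h11).symm
  have hadR : Aᵀ * D - Cᵀ * B' = 1 := by rw [sub_eq_iff_eq_add]; rw [← h12]; abel
  have hdaR : Dᵀ * A - B'ᵀ * C = 1 := by
    have := congrArg Neg.neg h21
    rw [neg_neg] at this; rw [sub_eq_iff_eq_add, ← this]; abel
  have hbdR : B'ᵀ * D - Dᵀ * B' = 0 := by rw [sub_eq_zero]; exact (neg_add_eq_zero.mp h22).symm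
  have hac : aᵀ * c - cᵀ * a = 0 := by
    rw [ha, hc, ← mapT, ← mapT, ← mapM, ← mapM, ← mapS, hacR]; ext i j; simp
  have had : aᵀ * d - cᵀ * b = 1 := by
    rw [ha, hb, hc, hd, ← mapT, ← mapT, ← mapM, ← mapM, ← mapS, hadR, map1]
  have hda : dᵀ * a - bᵀ * c = 1 := by
    rw [ha, hb, hc, hd, ← mapT, ← mapT, ← mapM, ← mapM, ← mapS, hdaR, map1]
  have hbd : bᵀ * d - dᵀ * b = 0 := by
    rw [hb, hd, ← mapT, ← mapT, ← mapM, ← mapM, ← mapS, hbdR]; ext i j; simp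
  -- the key identity
  set Bc := B.map (starRingEnd ℂ) with hBc
  have hBT : Bᵀ = B := hBsymm
  have hBcT : Bcᵀ = Bc := by rw [hBc, ← Matrix.transpose_map, hBT]
  set p := a * B + b with hp
  set q := c * B + d with hq
  set pc := a * Bc + b with hpc
  set qc := c * Bc + d with hqc
  have key : pᵀ * qc - qᵀ * pc = B - Bc := by
    have e : (B * aᵀ + bᵀ) * (c * Bc + d) - (B * cᵀ + dᵀ) * (a * Bc + b)
        = B * (aᵀ * c - cᵀ * a) * Bc + B * (aᵀ * d - cᵀ * b)
          - (dᵀ * a - bᵀ * c) * Bc + (bᵀ * d - dᵀ * b) := by noncomm_ring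
    have hpT : pᵀ = B * aᵀ + bᵀ := by rw [hp, Matrix.transpose_add, Matrix.transpose_mul, hBT]
    have hqT : qᵀ = B * cᵀ + dᵀ := by rw [hq, Matrix.transpose_add, Matrix.transpose_mul, hBT]
    rw [hpT, hqT, e, hac, had, hda, hbd]
    simp
  -- suppose the determinant vanishes
  rw [isUnit_iff_ne_zero]
  intro hdet
  obtain ⟨v, hv, hQv⟩ := (Matrix.exists_mulVec_eq_zero_iff).mpr hdet
  -- q conjugate kills star v
  have hqmap : q.map (starRingEnd ℂ) = qc := by
    rw [hq, hqc]
    have : (c * B + d).map (starRingEnd ℂ)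
        = c.map (starRingEnd ℂ) * B.map (starRingEnd ℂ) + d.map (starRingEnd ℂ) := by
      ext i j; simp [Matrix.map_apply, Matrix.add_apply, Matrix.mul_apply, map_sum]
    rw [this]
    congr 1
    · congr 1
      ext i j; simp [hc, Matrix.map_apply, Complex.conj_ofReal]
    · ext i j; simp [hd, Matrix.map_apply, Complex.conj_ofReal]
  have hstar : qc *ᵥ (star v) = 0 := by
    rw [← hqmap]
    ext i
    have := congrFun hQv i
    simp only [Matrix.mulVec, dotProduct, Matrix.map_apply, Pi.star_apply,
      Pi.zero_apply] at this ⊢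
    calc (∑ j, (starRingEnd ℂ) (q i j) * star (v j))
        = (starRingEnd ℂ) (∑ j, q i j * v j) := by simp [map_sum]
      _ = 0 := by rw [this]; simp
  have e1 : v ⬝ᵥ ((pᵀ * qc) *ᵥ star v) = 0 := by
    rw [← Matrix.mulVec_mulVec, hstar, Matrix.mulVec_zero, dotProduct_zero]
  have e2 : v ⬝ᵥ ((qᵀ * pc) *ᵥ star v) = 0 := by
    rw [← Matrix.mulVec_mulVec, Matrix.dotProduct_mulVec, Matrix.vecMul_transpose, hQv,
      zero_dotProduct]
  have e3 : v ⬝ᵥ ((B - Bc) *ᵥ star v) = 0 := by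
    rw [← key, Matrix.sub_mulVec, dotProduct_sub, e1, e2, sub_zero]
  -- reduce to the imaginary part
  set Y := (Matrix.of fun i j => (B i j).im) with hYdef
  have hBBc : B - Bc = (2 * I) • (Matrix.of fun i j => ((Y i j : ℝ) : ℂ)) := by
    ext i j
    simp only [Matrix.sub_apply, Matrix.smul_apply, Matrix.of_apply, hBc, Matrix.map_apply,
      hYdef, smul_eq_mul]
    rw [Complex.sub_conj]
    push_cast
    ring
  have e4 : v ⬝ᵥ ((Matrix.of fun i j => ((Y i j : ℝ) : ℂ)) *ᵥ star v) = 0 := by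
    rw [hBBc] at e3
    rw [Matrix.smul_mulVec, dotProduct_smul, smul_eq_mul, mul_eq_zero] at e3
    rcases e3 with h | h
    · exact absurd h (by simp [Complex.I_ne_zero])
    · exact h
  -- take real parts
  set x : Fin g → ℝ := fun i => (v i).re with hx
  set y : Fin g → ℝ := fun i => (v i).im with hyv
  have hre : (v ⬝ᵥ ((Matrix.of fun i j => ((Y i j : ℝ) : ℂ)) *ᵥ star v)).re
      = x ⬝ᵥ (Y *ᵥ x) + y ⬝ᵥ (Y *ᵥ y) := by
    simp only [dotProduct, Matrix.mulVec, Matrix.of_apply, Pi.star_apply]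
    rw [Complex.re_sum]
    rw [← Finset.sum_add_distrib]
    refine Finset.sum_congr rfl fun i _ => ?_
    rw [Finset.mul_sum, Finset.mul_sum, Finset.mul_sum, Complex.re_sum, ← Finset.sum_add_distrib]
    refine Finset.sum_congr rfl fun j _ => ?_
    simp [Complex.mul_re, Complex.mul_im, hx, hyv]
  rw [e4] at hre
  -- positivity
  have hxy : x ≠ 0 ∨ y ≠ 0 := by
    by_contra h
    push_neg at h
    apply hv
    funext i
    have h1 := congrFun h.1 i
    have h2 := congrFun h.2 i
    simp [hx, hyv] at h1 h2
    exact Complex.ext h1 h2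
  have hxq : 0 ≤ x ⬝ᵥ (Y *ᵥ x) := by simpa using hY.posSemidef.dotProduct_mulVec_nonneg x
  have hyq : 0 ≤ y ⬝ᵥ (Y *ᵥ y) := by simpa using hY.posSemidef.dotProduct_mulVec_nonneg y
  have hpos : 0 < x ⬝ᵥ (Y *ᵥ x) + y ⬝ᵥ (Y *ᵥ y) := by
    rcases hxy with h | h
    · have := hY.dotProduct_mulVec_pos h; simp only [star_trivial] at this; linarith
    · have := hY.dotProduct_mulVec_pos h; simp only [star_trivial] at this; linarith
  rw [← hre] at hpos
  simp at hpos
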